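/- (Theorem 3(b)) Assume B is bounded and strictly positive, Hypothesis 2.1 holds, and Φ''(x) ≤ 0 for x ∈ (0,1). If R₀ < 1, then the disease-free equilibrium X₀* = (S*, 0, 0, 0) of system (4) attracts every solution with initial condition in Ω = {(S,E,I,R) ∈ ℝ⁴₊ : S > 0}: along any such solution, S(t) → S*, E(t) → 0, I(t) → 0 and R(t) → 0 as t → ∞. -/

import Mathlib

open Filter Set Topology

/-- If `x(t+1) ≤ q x(t) + u(t)` with `0 ≤ q < 1`, `x ≥ 0`, `u → 0`, then `x → 0`. -/
lemma seirs_geom_decay {q : ℝ} (hq0 : 0 ≤ q) (hq1 : q < 1) (x u : ℕ → ℝ)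
    (hx : ∀ t, 0 ≤ x t) (hrec : ∀ t, x (t+1) ≤ q * x t + u t)
    (hu : Tendsto u atTop (𝓝 0)) : Tendsto x atTop (𝓝 0) := by
  rw [Metric.tendsto_atTop]
  intro ε hε
  obtain ⟨T, hT⟩ := Metric.tendsto_atTop.1 hu ((1 - q) * ε / 2) (by nlinarith)
  have hTle : ∀ t ≥ T, u t ≤ (1 - q) * ε / 2 := by
    intro t ht
    have := hT t ht
    rw [Real.dist_eq, sub_zero] at this
    have := le_of_lt this
    calc u t ≤ |u t| := le_abs_self _
      _ ≤ (1 - q) * ε / 2 := this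
  have key : ∀ k, x (T + k) ≤ q ^ k * x T + ε / 2 := by
    intro k
    induction k with
    | zero => simp; linarith
    | succ k ih =>
      have h1 := hrec (T + k)
      have h2 := hTle (T + k) (Nat.le_add_right _ _)
      have h3 : q * x (T + k) ≤ q * (q ^ k * x T + ε / 2) :=
        mul_le_mul_of_nonneg_left ih hq0
      have h4 : x (T + (k + 1)) = x (T + k + 1) := by rw [Nat.add_succ]
      rw [h4]
      have h5 : q * (q ^ k * x T + ε / 2) + (1 - q) * ε / 2
          ≤ q ^ (k + 1) * x T + ε / 2 := by
        have : q * (ε / 2) ≤ ε / 2 := by nlinarith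
        calc q * (q ^ k * x T + ε / 2) + (1 - q) * ε / 2
            = q ^ (k+1) * x T + q * (ε / 2) + (1 - q) * ε / 2 := by ring
          _ ≤ q ^ (k+1) * x T + ε / 2 := by linarith
      linarith
  have hpow : Tendsto (fun k => q ^ k * x T) atTop (𝓝 0) := by
    simpa using (tendsto_pow_atTop_nhds_zero_of_lt_one hq0 hq1).mul_const (x T)
  obtain ⟨k0, hk0⟩ := Metric.tendsto_atTop.1 hpow (ε / 2) (by linarith)
  refine ⟨T + k0, fun n hn => ?_⟩
  have h1 : x n ≤ q ^ (n - T) * x T + ε / 2 := by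
    have := key (n - T)
    rwa [Nat.add_sub_cancel' (by omega)] at this
  have h2 := hk0 (n - T) (by omega)
  rw [Real.dist_eq, sub_zero] at h2
  have h3 : q ^ (n - T) * x T < ε / 2 := lt_of_abs_lt h2
  rw [Real.dist_eq, sub_zero, abs_of_nonneg (hx n)]
  linarith


/-- Convergence of a perturbed orbit with vanishing perturbation. -/
lemma seirs_perturbed_tendsto (f : ℝ → ℝ) (b0 Cb : ℝ) (hb0 : 0 < b0)
    (hfc : ContinuousOn f (Ioi 0))
    (hmaps0 : MapsTo f (Ioi 0) (Ioi 0))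
    (hmaps : MapsTo f (Icc b0 Cb) (Icc b0 Cb))
    (Sstar : ℝ)
    (δ k : ℝ) (hδ : 0 < δ) (hk0 : 0 ≤ k) (hk1 : k < 1)
    (hcontr : ∀ x, |x - Sstar| < δ → |f x - Sstar| ≤ k * |x - Sstar|)
    (hGAS : ∀ x ∈ Icc b0 Cb, Tendsto (fun t => f^[t] x) atTop (𝓝 Sstar))
    (y : ℕ → ℝ) (hy : ∀ t, y t ∈ Icc b0 Cb)
    (hε : Tendsto (fun t => y (t+1) - f (y t)) atTop (𝓝 0)) :
    Tendsto y atTop (𝓝 Sstar) := by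
  have hKsub : Icc b0 Cb ⊆ Ioi 0 := fun x hx => lt_of_lt_of_le hb0 hx.1
  -- continuity of iterates on Ioi 0
  have hitc : ∀ T : ℕ, ContinuousOn f^[T] (Ioi (0:ℝ)) := by
    intro T
    induction T with
    | zero => simpa using continuousOn_id
    | succ T ih =>
      rw [Function.iterate_succ']
      exact hfc.comp ih (hmaps0.iterate T)
  -- the open sets
  set O : ℕ → Set ℝ := fun T => Ioi 0 ∩ f^[T] ⁻¹' Metric.ball Sstar (δ/2) with hO
  have hOopen : ∀ T, IsOpen (O T) := fun T =>
    (hitc T).isOpen_inter_preimage isOpen_Ioi Metric.isOpen_ball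
  have hOstep : ∀ T, O T ⊆ O (T+1) := by
    intro T x hx
    obtain ⟨hx0, hxb⟩ := hx
    rw [mem_preimage, Metric.mem_ball, Real.dist_eq] at hxb
    refine ⟨hx0, ?_⟩
    rw [mem_preimage, Metric.mem_ball, Real.dist_eq, Function.iterate_succ_apply']
    have h1 : |f (f^[T] x) - Sstar| ≤ k * |f^[T] x - Sstar| :=
      hcontr _ (lt_trans hxb (by linarith))
    have h2 : k * |f^[T] x - Sstar| ≤ |f^[T] x - Sstar| := by
      nlinarith [abs_nonneg (f^[T] x - Sstar)]
    linarith
  have hOmono : ∀ i j : ℕ, i ≤ j → O i ⊆ O j := by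
    intro i j hij
    induction j, hij using Nat.le_induction with
    | base => exact subset_rfl
    | succ j hij ih => exact ih.trans (hOstep j)
  have hcover : Icc b0 Cb ⊆ ⋃ T, O T := by
    intro x hx
    have := Metric.tendsto_atTop.1 (hGAS x hx) (δ/2) (by linarith)
    obtain ⟨T, hT⟩ := this
    refine mem_iUnion.2 ⟨T, hKsub hx, ?_⟩
    rw [mem_preimage, Metric.mem_ball]
    exact hT T le_rfl
  obtain ⟨s, hs⟩ := isCompact_Icc.elim_finite_subcover O hOopen hcover
  set T : ℕ := s.sup id with hTdef
  have hKO : Icc b0 Cb ⊆ O T := by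
    intro x hx
    obtain ⟨i, hi, hxi⟩ := mem_iUnion₂.1 (hs hx)
    exact hOmono i T (Finset.le_sup (f := id) hi) hxi
  -- uniform continuity
  have hUC : ∀ ε : ℝ, 0 < ε → ∃ d > 0, ∀ u ∈ Icc b0 Cb, ∀ v ∈ Icc b0 Cb,
      |u - v| ≤ d → |f u - f v| ≤ ε := by
    intro ε hε'
    have huc := isCompact_Icc.uniformContinuousOn_of_continuous (hfc.mono hKsub)
    rw [Metric.uniformContinuousOn_iff] at huc
    obtain ⟨d, hd, hduv⟩ := huc ε hε'
    refine ⟨d/2, by linarith, fun u hu v hv huv => ?_⟩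
    have := hduv u hu v hv (by rw [Real.dist_eq]; linarith)
    rw [Real.dist_eq] at this
    exact this.le
  -- T-step shadowing
  have claim : ∀ Tn : ℕ, ∀ γ : ℝ, 0 < γ → ∃ η > 0, ∀ t0 : ℕ,
      (∀ s' < Tn, |y (t0+s'+1) - f (y (t0+s'))| ≤ η) →
      |y (t0+Tn) - f^[Tn] (y t0)| ≤ γ := by
    intro Tn
    induction Tn with
    | zero =>
      intro γ hγ
      exact ⟨1, one_pos, fun t0 _ => by simp [hγ.le]⟩
    | succ Tn ih =>
      intro γ hγ
      obtain ⟨d, hd, hdprop⟩ := hUC (γ/2) (by linarith)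
      obtain ⟨η', hη', hprop⟩ := ih d hd
      refine ⟨min η' (γ/2), lt_min hη' (by linarith), fun t0 hb => ?_⟩
      have h1 : |y (t0+Tn) - f^[Tn] (y t0)| ≤ d :=
        hprop t0 (fun s' hs' =>
          le_trans (hb s' (Nat.lt_succ_of_lt hs')) (min_le_left _ _))
      have hyK : y (t0+Tn) ∈ Icc b0 Cb := hy _
      have hfK : f^[Tn] (y t0) ∈ Icc b0 Cb := hmaps.iterate Tn (hy t0)
      have h2 : |f (y (t0+Tn)) - f (f^[Tn] (y t0))| ≤ γ/2 := hdprop _ hyK _ hfK h1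
      have h3 : |y (t0+Tn+1) - f (y (t0+Tn))| ≤ γ/2 :=
        le_trans (hb Tn (Nat.lt_succ_self Tn)) (min_le_right _ _)
      have h4 : f^[Tn+1] (y t0) = f (f^[Tn] (y t0)) := Function.iterate_succ_apply' f Tn (y t0)
      have h5 : t0 + (Tn+1) = t0 + Tn + 1 := by omega
      rw [h5, h4]
      calc |y (t0+Tn+1) - f (f^[Tn] (y t0))|
          ≤ |y (t0+Tn+1) - f (y (t0+Tn))| + |f (y (t0+Tn)) - f (f^[Tn] (y t0))| :=
            abs_sub_le _ _ _
        _ ≤ γ/2 + γ/2 := add_le_add h3 h2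
        _ = γ := by ring
  obtain ⟨η, hη, hclaim⟩ := claim T (δ/2) (by linarith)
  set η2 : ℝ := min η ((1-k)*δ/2) with hη2def
  have hη2 : 0 < η2 := lt_min hη (by nlinarith)
  obtain ⟨t0, ht0⟩ := Metric.tendsto_atTop.1 hε η2 hη2
  have ht0' : ∀ t ≥ t0, |y (t+1) - f (y t)| ≤ η2 := by
    intro t ht
    have := ht0 t ht
    rw [Real.dist_eq, sub_zero] at this
    exact this.le
  have henter : |y (t0+T) - Sstar| < δ := by
    have h1 : |y (t0+T) - f^[T] (y t0)| ≤ δ/2 :=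
      hclaim t0 (fun s' _ => le_trans (ht0' (t0+s') (by omega)) (min_le_left _ _))
    have h2 : y t0 ∈ O T := hKO (hy t0)
    have h3 : |f^[T] (y t0) - Sstar| < δ/2 := by
      have := h2.2
      rwa [mem_preimage, Metric.mem_ball, Real.dist_eq] at this
    calc |y (t0+T) - Sstar|
        ≤ |y (t0+T) - f^[T] (y t0)| + |f^[T] (y t0) - Sstar| := abs_sub_le _ _ _
      _ < δ := by linarith
  have hstay : ∀ m, |y (t0+T+m) - Sstar| < δ := by
    intro m
    induction m with
    | zero => exact henter
    | succ m ih =>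
      have hc := hcontr _ ih
      have he : |y (t0+T+m+1) - f (y (t0+T+m))| ≤ η2 := ht0' _ (by omega)
      have h6 : t0+T+(m+1) = t0+T+m+1 := by omega
      rw [h6]
      have hkd : k * |y (t0+T+m) - Sstar| ≤ k * δ :=
        mul_le_mul_of_nonneg_left ih.le hk0
      have hη2' : η2 ≤ (1-k)*δ/2 := min_le_right _ _
      calc |y (t0+T+m+1) - Sstar|
          ≤ |y (t0+T+m+1) - f (y (t0+T+m))| + |f (y (t0+T+m)) - Sstar| := abs_sub_le _ _ _
        _ ≤ η2 + k * |y (t0+T+m) - Sstar| := add_le_add he hc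
        _ ≤ (1-k)*δ/2 + k*δ := add_le_add hη2' hkd
        _ < δ := by nlinarith
  set n0 := t0 + T with hn0
  have hw : Tendsto (fun t => |y (t + n0) - Sstar|) atTop (𝓝 0) := by
    refine seirs_geom_decay hk0 hk1 _ (fun t => |y (t + n0 + 1) - f (y (t + n0))|)
      (fun t => abs_nonneg _) ?_ ?_
    · intro t
      have hst : |y (t + n0) - Sstar| < δ := by
        have := hstay t
        rwa [show n0 + t = t + n0 by omega] at this
      have hc := hcontr _ hst
      have h7 : t + 1 + n0 = t + n0 + 1 := by omega
      calc |y (t + 1 + n0) - Sstar|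
          = |y (t + n0 + 1) - Sstar| := by rw [h7]
        _ ≤ |y (t + n0 + 1) - f (y (t + n0))| + |f (y (t + n0)) - Sstar| := abs_sub_le _ _ _
        _ ≤ k * |y (t + n0) - Sstar| + |y (t + n0 + 1) - f (y (t + n0))| := by linarith
    · have h8 : Tendsto (fun t => y (t + n0 + 1) - f (y (t + n0))) atTop (𝓝 0) :=
        hε.comp (tendsto_add_atTop_nat n0)
      have := h8.abs
      simpa using this
  have h9 : Tendsto (fun t => y (t + n0)) atTop (𝓝 Sstar) := by
    rw [tendsto_iff_dist_tendsto_zero]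
    simpa [Real.dist_eq] using hw
  exact (tendsto_add_atTop_iff_nat n0).1 h9


lemma seirs_concave_bound (Φ : ℝ → ℝ)
    (hΦC2 : ContDiffOn ℝ 2 Φ (Icc 0 1)) (hΦ0 : Φ 0 = 0)
    (hconc : ∀ x ∈ Ioo (0:ℝ) 1, iteratedDerivWithin 2 Φ (Icc 0 1) x ≤ 0) :
    ∀ x ∈ Icc (0:ℝ) 1, Φ x ≤ derivWithin Φ (Icc 0 1) 0 * x := by
  have hs : UniqueDiffOn ℝ (Icc (0:ℝ) 1) := uniqueDiffOn_Icc one_pos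
  set φ' := derivWithin Φ (Icc (0:ℝ) 1) with hφ'
  have hφ'cd : ContDiffOn ℝ 1 φ' (Icc 0 1) := hΦC2.derivWithin hs (by norm_num)
  have hφ'cont : ContinuousOn φ' (Icc 0 1) := hφ'cd.continuousOn
  have hdiffAt : ∀ x ∈ Ioo (0:ℝ) 1, DifferentiableAt ℝ φ' x := fun x hx =>
    ((hφ'cd.differentiableOn (by norm_num)) x (Ioo_subset_Icc_self hx)).differentiableAt
      (Icc_mem_nhds hx.1 hx.2)
  have hΦdiffAt : ∀ x ∈ Ioo (0:ℝ) 1, DifferentiableAt ℝ Φ x := fun x hx =>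
    ((hΦC2.differentiableOn (by norm_num)) x (Ioo_subset_Icc_self hx)).differentiableAt
      (Icc_mem_nhds hx.1 hx.2)
  have hderiv_eq : ∀ x ∈ Ioo (0:ℝ) 1, deriv φ' x = iteratedDerivWithin 2 Φ (Icc 0 1) x := by
    intro x hx
    have h1 : derivWithin φ' (Icc 0 1) x = deriv φ' x :=
      derivWithin_of_mem_nhds (Icc_mem_nhds hx.1 hx.2)
    rw [← h1, show (2:ℕ) = 1 + 1 from rfl,
      iteratedDerivWithin_succ]
    exact (derivWithin_congr
      (fun y hy => congrFun iteratedDerivWithin_one y)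
      (congrFun iteratedDerivWithin_one x)).symm
  have hanti : AntitoneOn φ' (Icc 0 1) := by
    refine antitoneOn_of_deriv_nonpos (convex_Icc 0 1) hφ'cont ?_ ?_
    · intro x hx
      rw [interior_Icc] at hx
      exact (hdiffAt x hx).differentiableWithinAt
    · intro x hx
      rw [interior_Icc] at hx
      rw [hderiv_eq x hx]
      exact hconc x hx
  intro x hx
  rcases eq_or_lt_of_le hx.1 with h0 | h0
  · simp [← h0, hΦ0]
  · have hcont : ContinuousOn Φ (Icc 0 x) :=
      hΦC2.continuousOn.mono (Icc_subset_Icc le_rfl hx.2)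
    have hdiff : DifferentiableOn ℝ Φ (Ioo 0 x) := by
      intro y hy
      exact (hΦdiffAt y ⟨hy.1, lt_of_lt_of_le hy.2 hx.2⟩).differentiableWithinAt
    obtain ⟨c, hc, hcslope⟩ := exists_deriv_eq_slope Φ h0 hcont hdiff
    have hc' : c ∈ Ioo (0:ℝ) 1 := ⟨hc.1, lt_of_lt_of_le hc.2 hx.2⟩
    have h1 : deriv Φ c = φ' c :=
      (derivWithin_of_mem_nhds (Icc_mem_nhds hc'.1 hc'.2)).symm
    have h2 : φ' c ≤ φ' 0 :=
      hanti (left_mem_Icc.2 zero_le_one) (Ioo_subset_Icc_self hc') hc'.1.le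
    have h3 : (Φ x - Φ 0) / (x - 0) ≤ φ' 0 := by
      rw [← hcslope, h1]; exact h2
    rw [hΦ0, sub_zero, sub_zero, div_le_iff₀ h0] at h3
    linarith

set_option maxHeartbeats 1000000 in
/-- Theorem 3(b): if `R₀ < 1` and `Φ'' ≤ 0` on `(0,1)`, under
Hypothesis 2.1 the disease-free equilibrium `(S*,0,0,0)` of system (4) attracts
every solution starting in `Ω = {S > 0} ∩ ℝ⁴₊`. -/
theorem seirs_DFE_globally_attracting
    (σS σE σI σR γE γI γR : ℝ)
    (hσS : σS ∈ Set.Ioo (0:ℝ) 1) (hσE : σE ∈ Set.Ioo (0:ℝ) 1)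
    (hσI : σI ∈ Set.Ioo (0:ℝ) 1) (hσR : σR ∈ Set.Ioo (0:ℝ) 1)
    (hγE : γE ∈ Set.Ioo (0:ℝ) 1) (hγI : γI ∈ Set.Ioo (0:ℝ) 1)
    (hγR : γR ∈ Set.Ioo (0:ℝ) 1)
    (Φ : ℝ → ℝ)
    (hΦmap : ∀ x ∈ Set.Icc (0:ℝ) 1, Φ x ∈ Set.Icc (0:ℝ) 1)
    (hΦ0 : Φ 0 = 0)
    (hΦmono : StrictMonoOn Φ (Set.Icc (0:ℝ) 1))
    (hΦC2 : ContDiffOn ℝ 2 Φ (Set.Icc (0:ℝ) 1))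
    (hΦconc : ∀ x ∈ Set.Ioo (0:ℝ) 1, iteratedDerivWithin 2 Φ (Set.Icc (0:ℝ) 1) x ≤ 0)
    (B : ℝ → ℝ)
    (hBC1 : ContDiffOn ℝ 1 B (Set.Ici (0:ℝ)))
    (hBpos : ∀ x ∈ Set.Ici (0:ℝ), 0 < B x)
    (Bhat : ℝ) (hBbd : ∀ x ∈ Set.Ici (0:ℝ), B x ≤ Bhat)
    -- Hypothesis 2.1 for the scalar map Σ(S) = B(S) + σS·S :
    (Sstar : ℝ) (hSstar_pos : 0 < Sstar)
    (hfix : B Sstar + σS * Sstar = Sstar)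
    (huniq : ∀ x, 0 < x → B x + σS * x = x → x = Sstar)
    (B' : ℝ) (hB' : HasDerivAt B B' Sstar) (hhyperbolic : |B' + σS| < 1)
    (hscalarGAS : ∀ S0, 0 < S0 →
      Filter.Tendsto (fun t => (fun s => B s + σS * s)^[t] S0) Filter.atTop (nhds Sstar))
    -- R₀ < 1, with Φ'(0) the derivative of Φ at 0 within [0,1] :
    (hR0 : σE * σI * γE * derivWithin Φ (Set.Icc (0:ℝ) 1) 0 /
        ((1 - σE * (1 - γE)) * (1 - σI * (1 - γI))) < 1)
    -- a solution of system (4) starting in Ω :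
    (S E I R N : ℕ → ℝ)
    (hNdef : ∀ t, N t = S t + E t + I t + R t)
    (hS0 : 0 < S 0) (hE0 : 0 ≤ E 0) (hI0 : 0 ≤ I 0) (hR0' : 0 ≤ R 0)
    (hdynS : ∀ t, S (t+1) = B (N t) + σS * γR * R t
              + σS * (1 - Φ (I t / N t)) * S t)
    (hdynE : ∀ t, E (t+1) = σE * Φ (I t / N t) * S t + σE * (1 - γE) * E t)
    (hdynI : ∀ t, I (t+1) = σI * γE * E t + σI * (1 - γI) * I t)
    (hdynR : ∀ t, R (t+1) = σR * γI * I t + σR * (1 - γR) * R t) :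
    Filter.Tendsto S Filter.atTop (nhds Sstar) ∧
    Filter.Tendsto E Filter.atTop (nhds 0) ∧
    Filter.Tendsto I Filter.atTop (nhds 0) ∧
    Filter.Tendsto R Filter.atTop (nhds 0) := by
  obtain ⟨hσS0, hσS1⟩ := hσS
  obtain ⟨hσE0, hσE1⟩ := hσE
  obtain ⟨hσI0, hσI1⟩ := hσI
  obtain ⟨hσR0, hσR1⟩ := hσR
  obtain ⟨hγE0, hγE1⟩ := hγE
  obtain ⟨hγI0, hγI1⟩ := hγI
  obtain ⟨hγR0, hγR1⟩ := hγR
  set d0 := derivWithin Φ (Set.Icc (0:ℝ) 1) 0 with hd0def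
  have hΦle : ∀ x ∈ Set.Icc (0:ℝ) 1, Φ x ≤ d0 * x :=
    seirs_concave_bound Φ hΦC2 hΦ0 hΦconc
  have hd0pos : 0 < d0 := by
    have h1 : Φ (1/2) ≤ d0 * (1/2) := hΦle _ (by norm_num)
    have h2 : Φ 0 < Φ (1/2) :=
      hΦmono (by norm_num : (0:ℝ) ∈ Set.Icc (0:ℝ) 1) (by norm_num) (by norm_num)
    rw [hΦ0] at h2
    linarith only [h1, h2]
  -- positivity
  have hpos : ∀ t, 0 < S t ∧ 0 ≤ E t ∧ 0 ≤ I t ∧ 0 ≤ R t := by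
    intro t
    induction t with
    | zero => exact ⟨hS0, hE0, hI0, hR0'⟩
    | succ t ih =>
      obtain ⟨hSt, hEt, hIt, hRt⟩ := ih
      have hNt : 0 < N t := by
        rw [hNdef]; linarith only [hSt, hEt, hIt, hRt]
      have hIN : I t / N t ∈ Set.Icc (0:ℝ) 1 := by
        constructor
        · exact div_nonneg hIt hNt.le
        · rw [div_le_one hNt, hNdef]; linarith only [hSt, hEt, hRt]
      obtain ⟨hΦ1, hΦ2⟩ := hΦmap _ hIN
      have hB := hBpos (N t) hNt.le
      refine ⟨?_, ?_, ?_, ?_⟩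
      · rw [hdynS]
        have h1 : 0 ≤ σS * γR * R t := by positivity
        have h2 : 0 ≤ σS * (1 - Φ (I t / N t)) * S t :=
          mul_nonneg (mul_nonneg hσS0.le (by linarith only [hΦ2])) hSt.le
        linarith only [h1, h2, hB]
      · rw [hdynE]
        have h1 : 0 ≤ σE * Φ (I t / N t) * S t :=
          mul_nonneg (mul_nonneg hσE0.le hΦ1) hSt.le
        have h2 : 0 ≤ σE * (1 - γE) * E t :=
          mul_nonneg (mul_nonneg hσE0.le (by linarith only [hγE1])) hEt
        linarith only [h1, h2]
      · rw [hdynI]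
        have h1 : 0 ≤ σI * γE * E t := by positivity
        have h2 : 0 ≤ σI * (1 - γI) * I t :=
          mul_nonneg (mul_nonneg hσI0.le (by linarith only [hγI1])) hIt
        linarith only [h1, h2]
      · rw [hdynR]
        have h1 : 0 ≤ σR * γI * I t := by positivity
        have h2 : 0 ≤ σR * (1 - γR) * R t :=
          mul_nonneg (mul_nonneg hσR0.le (by linarith only [hγR1])) hRt
        linarith only [h1, h2]
  have hNpos : ∀ t, 0 < N t := by
    intro t
    obtain ⟨h1, h2, h3, h4⟩ := hpos t
    rw [hNdef]; linarith only [h1, h2, h3, h4]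
  have hINmem : ∀ t, I t / N t ∈ Set.Icc (0:ℝ) 1 := by
    intro t
    obtain ⟨h1, h2, h3, h4⟩ := hpos t
    constructor
    · exact div_nonneg h3 (hNpos t).le
    · rw [div_le_one (hNpos t), hNdef]; linarith only [h1, h2, h4]
  -- upper bound on N
  set σ : ℝ := max (max σS σE) (max σI σR) with hσdef
  have hσS' : σS ≤ σ := le_trans (le_max_left _ _) (le_max_left _ _)
  have hσE' : σE ≤ σ := le_trans (le_max_right _ _) (le_max_left _ _)
  have hσI' : σI ≤ σ := le_trans (le_max_left _ _) (le_max_right _ _)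
  have hσR' : σR ≤ σ := le_trans (le_max_right _ _) (le_max_right _ _)
  have hσ0 : 0 < σ := lt_of_lt_of_le hσS0 hσS'
  have hσ1 : σ < 1 := by
    rw [hσdef]
    exact max_lt (max_lt hσS1 hσE1) (max_lt hσI1 hσR1)
  set C : ℝ := max (N 0) (Bhat / (1 - σ)) with hCdef
  have hBhat0 : 0 < Bhat := lt_of_lt_of_le (hBpos 0 Set.self_mem_Ici) (hBbd 0 Set.self_mem_Ici)
  have h1σ : (0:ℝ) < 1 - σ := by linarith only [hσ1]
  have hBhatC : Bhat ≤ (1 - σ) * C := by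
    have h1 : Bhat / (1 - σ) ≤ C := le_max_right _ _
    calc Bhat = (1 - σ) * (Bhat / (1 - σ)) := by field_simp
      _ ≤ (1 - σ) * C := mul_le_mul_of_nonneg_left h1 h1σ.le
  have hNC : ∀ t, N t ≤ C := by
    intro t
    induction t with
    | zero => exact le_max_left _ _
    | succ t ih =>
      obtain ⟨hSt, hEt, hIt, hRt⟩ := hpos t
      obtain ⟨hΦ1, hΦ2⟩ := hΦmap _ (hINmem t)
      set Φv := Φ (I t / N t)
      have e1 : σS * γR * R t + σR * (1 - γR) * R t ≤ σ * R t := by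
        have k1 : 0 ≤ (σ - σS) * γR * R t :=
          mul_nonneg (mul_nonneg (by linarith) hγR0.le) hRt
        have k2 : 0 ≤ (σ - σR) * (1 - γR) * R t :=
          mul_nonneg (mul_nonneg (by linarith only [hσR']) (by linarith only [hγR1])) hRt
        have key : σ * R t - (σS * γR * R t + σR * (1 - γR) * R t)
            = (σ - σS) * γR * R t + (σ - σR) * (1 - γR) * R t := by ring
        linarith only [k1, k2, key]
      have e2 : σS * (1 - Φv) * S t + σE * Φv * S t ≤ σ * S t := by
        have k1 : 0 ≤ (σ - σS) * (1 - Φv) * S t :=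
          mul_nonneg (mul_nonneg (by linarith only [hσS']) (by linarith only [hΦ2])) hSt.le
        have k2 : 0 ≤ (σ - σE) * Φv * S t :=
          mul_nonneg (mul_nonneg (by linarith only [hσE']) hΦ1) hSt.le
        have key : σ * S t - (σS * (1 - Φv) * S t + σE * Φv * S t)
            = (σ - σS) * (1 - Φv) * S t + (σ - σE) * Φv * S t := by ring
        linarith only [k1, k2, key]
      have e3 : σE * (1 - γE) * E t + σI * γE * E t ≤ σ * E t := by
        have k1 : 0 ≤ (σ - σE) * (1 - γE) * E t :=
          mul_nonneg (mul_nonneg (by linarith only [hσE']) (by linarith only [hγE1])) hEt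
        have k2 : 0 ≤ (σ - σI) * γE * E t :=
          mul_nonneg (mul_nonneg (by linarith only [hσI']) hγE0.le) hEt
        have key : σ * E t - (σE * (1 - γE) * E t + σI * γE * E t)
            = (σ - σE) * (1 - γE) * E t + (σ - σI) * γE * E t := by ring
        linarith only [k1, k2, key]
      have e4 : σI * (1 - γI) * I t + σR * γI * I t ≤ σ * I t := by
        have k1 : 0 ≤ (σ - σI) * (1 - γI) * I t :=
          mul_nonneg (mul_nonneg (by linarith only [hσI']) (by linarith only [hγI1])) hIt
        have k2 : 0 ≤ (σ - σR) * γI * I t :=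
          mul_nonneg (mul_nonneg (by linarith only [hσR']) hγI0.le) hIt
        have key : σ * I t - (σI * (1 - γI) * I t + σR * γI * I t)
            = (σ - σI) * (1 - γI) * I t + (σ - σR) * γI * I t := by ring
        linarith only [k1, k2, key]
      have hBN := hBbd (N t) (hNpos t).le
      have hNrec : N (t+1) ≤ Bhat + σ * N t := by
        rw [hNdef (t+1), hdynS t, hdynE t, hdynI t, hdynR t]
        have h7 : σ * N t = σ * S t + σ * E t + σ * I t + σ * R t := by
          rw [hNdef t]; ring
        linarith only [e1, e2, e3, e4, hBN, h7]
      have hσN : σ * N t ≤ σ * C := mul_le_mul_of_nonneg_left ih hσ0.le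
      linarith only [hNrec, hσN, hBhatC]
  have hSleN : ∀ t, S t ≤ N t := by
    intro t
    obtain ⟨h1, h2, h3, h4⟩ := hpos t
    rw [hNdef]; linarith only [h2, h3, h4]
  have hCpos : 0 < C := lt_of_lt_of_le (hNpos 0) (hNC 0)
  obtain ⟨xm, hxm, hminB⟩ := isCompact_Icc.exists_isMinOn
    (⟨0, le_rfl, hCpos.le⟩ : (Set.Icc (0:ℝ) C).Nonempty)
    (hBC1.continuousOn.mono (fun x hx => hx.1))
  set b0 : ℝ := B xm with hb0def
  have hb0pos : 0 < b0 := hBpos xm hxm.1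
  have hminB' : ∀ x ∈ Set.Icc (0:ℝ) C, b0 ≤ B x := fun x hx => hminB hx
  -- E and I tend to zero
  have ha1 : σE * (1 - γE) < 1 := by
    have k1 := mul_pos hσE0 hγE0
    have key : σE * (1 - γE) = σE - σE * γE := by ring
    linarith only [k1, key, hσE1]
  have hd1 : σI * (1 - γI) < 1 := by
    have k1 := mul_pos hσI0 hγI0
    have key : σI * (1 - γI) = σI - σI * γI := by ring
    linarith only [k1, key, hσI1]
  have hbc : (σE * d0) * (σI * γE) < (1 - σE * (1 - γE)) * (1 - σI * (1 - γI)) := by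
    have hden : 0 < (1 - σE * (1 - γE)) * (1 - σI * (1 - γI)) := by
      apply mul_pos
      · linarith only [ha1]
      · linarith only [hd1]
    rw [div_lt_one hden] at hR0
    calc (σE * d0) * (σI * γE) = σE * σI * γE * d0 := by ring
      _ < _ := hR0
  have ha0 : 0 < σE * (1 - γE) := mul_pos hσE0 (by linarith only [hγE1])
  have hdd0 : 0 < σI * (1 - γI) := mul_pos hσI0 (by linarith only [hγI1])
  set a : ℝ := σE * (1 - γE) with hadef
  set bb : ℝ := σE * d0 with hbbdef
  set c : ℝ := σI * γE with hcdef
  set dd : ℝ := σI * (1 - γI) with hdddef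
  have hcpos : 0 < c := by rw [hcdef]; positivity
  have hbb0 : 0 ≤ bb := by rw [hbbdef]; positivity
  obtain ⟨θ, hθbc, hθmax, hθ1⟩ :
      ∃ θ : ℝ, bb * c < (θ - a) * (θ - dd) ∧ max a dd < θ ∧ θ < 1 := by
    have hne : (𝓝[<] (1:ℝ)).NeBot := nhdsLT_neBot 1
    have h1 : Tendsto (fun θ : ℝ => (θ - a) * (θ - dd)) (𝓝[<] 1) (𝓝 ((1 - a) * (1 - dd))) :=
      (((continuous_id.sub continuous_const).mul
        (continuous_id.sub continuous_const)).tendsto 1).mono_left nhdsWithin_le_nhds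
    have h2 : ∀ᶠ θ in 𝓝[<] (1:ℝ), bb * c < (θ - a) * (θ - dd) :=
      h1.eventually (eventually_gt_nhds hbc)
    have h3 : ∀ᶠ θ in 𝓝[<] (1:ℝ), max a dd < θ :=
      eventually_nhdsWithin_of_eventually_nhds
        (eventually_gt_nhds (max_lt (by linarith only [ha1]) (by linarith only [hd1])))
    have h4 : ∀ᶠ θ in 𝓝[<] (1:ℝ), θ < 1 := eventually_mem_nhdsWithin
    obtain ⟨θ, hθ2, hθ3, hθ4⟩ := (h2.and (h3.and h4)).exists
    exact ⟨θ, hθ2, hθ3, hθ4⟩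
  have hθa : a < θ := lt_of_le_of_lt (le_max_left _ _) hθmax
  have hθd : dd < θ := lt_of_le_of_lt (le_max_right _ _) hθmax
  have hθ0 : 0 < θ := lt_trans ha0 hθa
  set α : ℝ := c / (θ - a) with hαdef
  have hαpos : 0 < α := div_pos hcpos (by linarith only [hθa])
  have hne : θ - a ≠ 0 := ne_of_gt (by linarith only [hθa])
  have hkey1 : α * a + c = θ * α := by
    rw [hαdef]
    field_simp
    ring
  have hkey2 : α * bb + dd ≤ θ := by
    have h5 : 0 < θ - a := by linarith only [hθa]
    rw [hαdef, div_mul_eq_mul_div, ← sub_nonneg]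
    have h7 : θ - (c * bb / (θ - a) + dd) = ((θ - dd) * (θ - a) - c * bb) / (θ - a) := by
      field_simp
      ring
    rw [h7]
    have h6 : 0 ≤ (θ - dd) * (θ - a) - c * bb := by
      have key : (θ - dd) * (θ - a) - c * bb = (θ - a) * (θ - dd) - bb * c := by ring
      linarith only [key, hθbc]
    positivity
  set V : ℕ → ℝ := fun t => α * E t + I t with hVdef
  have hV0 : ∀ t, 0 ≤ V t := by
    intro t
    obtain ⟨h1, h2, h3, h4⟩ := hpos t
    have : 0 ≤ α * E t := mul_nonneg hαpos.le h2
    simp only [hVdef]; linarith only [this, h3]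
  have hΦSle : ∀ t, Φ (I t / N t) * S t ≤ d0 * I t := by
    intro t
    obtain ⟨h1, h2, h3, h4⟩ := hpos t
    have hle := hΦle _ (hINmem t)
    have hIN0 : 0 ≤ I t / N t := (hINmem t).1
    have h5 : Φ (I t / N t) * S t ≤ (d0 * (I t / N t)) * S t :=
      mul_le_mul_of_nonneg_right hle h1.le
    have h6 : (I t / N t) * S t ≤ (I t / N t) * N t :=
      mul_le_mul_of_nonneg_left (hSleN t) hIN0
    have h7 : (I t / N t) * N t = I t := div_mul_cancel₀ _ (hNpos t).ne'
    have h8 : d0 * ((I t / N t) * S t) ≤ d0 * I t := by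
      have h6' := h6
      rw [h7] at h6'
      exact mul_le_mul_of_nonneg_left h6' hd0pos.le
    have h9 : (d0 * (I t / N t)) * S t = d0 * ((I t / N t) * S t) := by ring
    linarith only [h5, h8, h9]
  have hVrec : ∀ t, V (t+1) ≤ θ * V t := by
    intro t
    obtain ⟨h1, h2, h3, h4⟩ := hpos t
    have hE1 : E (t+1) ≤ bb * I t + a * E t := by
      rw [hdynE t]
      have h5 : σE * (Φ (I t / N t) * S t) ≤ σE * (d0 * I t) :=
        mul_le_mul_of_nonneg_left (hΦSle t) hσE0.le
      have h6 : σE * Φ (I t / N t) * S t = σE * (Φ (I t / N t) * S t) := by ring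
      have h7 : bb * I t = σE * (d0 * I t) := by rw [hbbdef]; ring
      rw [h6, h7]
      linarith only [h5]
    have hI1 : I (t+1) = c * E t + dd * I t := by
      rw [hdynI t]
    simp only [hVdef]
    rw [hI1]
    have h8 : α * E (t+1) ≤ α * (bb * I t + a * E t) :=
      mul_le_mul_of_nonneg_left hE1 hαpos.le
    have h9 : α * (bb * I t + a * E t) + (c * E t + dd * I t)
        = (α * a + c) * E t + (α * bb + dd) * I t := by ring
    have h10 : (α * a + c) * E t = θ * (α * E t) := by rw [hkey1]; ring
    have h11 : (α * bb + dd) * I t ≤ θ * I t := mul_le_mul_of_nonneg_right hkey2 h3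
    calc α * E (t+1) + (c * E t + dd * I t)
        ≤ α * (bb * I t + a * E t) + (c * E t + dd * I t) := by linarith only [h8]
      _ = (α * a + c) * E t + (α * bb + dd) * I t := h9
      _ ≤ θ * (α * E t) + θ * I t := by rw [h10]; linarith only [h11]
      _ = θ * (α * E t + I t) := by ring
  have hVgeom : ∀ t, V t ≤ θ ^ t * V 0 := by
    intro t
    induction t with
    | zero => simp
    | succ t ih =>
      calc V (t+1) ≤ θ * V t := hVrec t
        _ ≤ θ * (θ ^ t * V 0) := mul_le_mul_of_nonneg_left ih hθ0.le
        _ = θ ^ (t+1) * V 0 := by ring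
  have hVtend : Tendsto V atTop (𝓝 0) := by
    apply squeeze_zero hV0 hVgeom
    simpa using (tendsto_pow_atTop_nhds_zero_of_lt_one hθ0.le hθ1).mul_const (V 0)
  have hEtend : Tendsto E atTop (𝓝 0) := by
    apply squeeze_zero (fun t => (hpos t).2.1) (g := fun t => (1/α) * V t)
    · intro t
      obtain ⟨h1, h2, h3, h4⟩ := hpos t
      rw [← sub_nonneg]
      have h5 : 1/α * V t - E t = (1/α) * (V t - α * E t) := by
        field_simp
      have h6 : V t - α * E t = I t := by simp only [hVdef]; ring
      rw [h5, h6]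
      positivity
    · simpa using hVtend.const_mul (1/α)
  have hItend : Tendsto I atTop (𝓝 0) := by
    apply squeeze_zero (fun t => (hpos t).2.2.1) (g := V)
    · intro t
      obtain ⟨h1, h2, h3, h4⟩ := hpos t
      have : 0 ≤ α * E t := mul_nonneg hαpos.le h2
      simp only [hVdef]; linarith only [this, h2]
    · exact hVtend
  have hRtend : Tendsto R atTop (𝓝 0) := by
    apply seirs_geom_decay (q := σR * (1 - γR))
      (mul_nonneg hσR0.le (by linarith only [hγR1]))
      (by
        have k1 := mul_pos hσR0 hγR0
        have key : σR * (1 - γR) = σR - σR * γR := by ring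
        linarith only [k1, key, hσR1])
      R (fun t => σR * γI * I t) (fun t => (hpos t).2.2.2)
    · intro t
      rw [hdynR t]
      apply le_of_eq; ring
    · simpa using hItend.const_mul (σR * γI)
  -- Step 3 : S → S*
  set f : ℝ → ℝ := fun s => B s + σS * s with hfdef
  have hfc : ContinuousOn f (Set.Ioi 0) := by
    apply ContinuousOn.add
    · exact hBC1.continuousOn.mono (fun x hx => Set.mem_Ici.2 (le_of_lt hx))
    · exact (continuous_const.mul continuous_id).continuousOn
  have hmaps0 : Set.MapsTo f (Set.Ioi 0) (Set.Ioi 0) := by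
    intro x hx
    have h1 := hBpos x (Set.mem_Ici.2 (le_of_lt hx))
    have h2 : 0 < σS * x := mul_pos hσS0 hx
    simp only [hfdef, Set.mem_Ioi]
    linarith only [h1, h2]
  have hb0C : b0 ≤ C := by
    have h1 : b0 ≤ B 0 := hminB' 0 ⟨le_rfl, hCpos.le⟩
    have h2 : B 0 ≤ Bhat := hBbd 0 Set.self_mem_Ici
    have h3 : 0 ≤ σ * C := mul_nonneg hσ0.le hCpos.le
    linarith only [h1, h2, h3, hBhatC]
  have hmapsK : Set.MapsTo f (Set.Icc b0 C) (Set.Icc b0 C) := by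
    intro x hx
    have hx0 : (0:ℝ) ≤ x := le_trans hb0pos.le hx.1
    have hxC : x ≤ C := hx.2
    constructor
    · have h1 : b0 ≤ B x := hminB' x ⟨hx0, hxC⟩
      have h2 : 0 ≤ σS * x := mul_nonneg hσS0.le hx0
      simp only [hfdef]
      linarith only [h1, h2]
    · have h1 : B x ≤ Bhat := hBbd x hx0
      have h2 : σS * x ≤ σ * C := mul_le_mul hσS' hxC hx0 hσ0.le
      simp only [hfdef]
      linarith only [h1, h2, hBhatC]
  set L : ℝ := B' + σS with hLdef
  have hfd : HasDerivAt f L Sstar := by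
    have h1 : HasDerivAt (fun s : ℝ => σS * s) σS Sstar := by
      simpa using (hasDerivAt_id Sstar).const_mul σS
    exact hB'.add h1
  set k : ℝ := (1 + |L|) / 2 with hkdef
  have hk0 : 0 ≤ k := by positivity
  have hk1 : k < 1 := by rw [hkdef]; linarith only [hhyperbolic]
  have hfixf : f Sstar = Sstar := by simp only [hfdef]; exact hfix
  obtain ⟨δ, hδpos, hδ⟩ :
      ∃ δ > 0, ∀ x, |x - Sstar| < δ → |f x - Sstar| ≤ k * |x - Sstar| := by
    have hlo := hasDerivAt_iff_isLittleO.1 hfd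
    have hc : (0:ℝ) < (1 - |L|) / 2 := by linarith only [hhyperbolic]
    have hev := hlo.def hc
    rw [Metric.eventually_nhds_iff] at hev
    obtain ⟨δ, hδpos, hδev⟩ := hev
    refine ⟨δ, hδpos, fun x hx => ?_⟩
    have h1 := hδev (show dist x Sstar < δ by rwa [Real.dist_eq])
    rw [Real.norm_eq_abs, Real.norm_eq_abs, smul_eq_mul] at h1
    have h2 : f x - Sstar = (f x - f Sstar - (x - Sstar) * L) + (x - Sstar) * L := by
      rw [hfixf]; ring
    rw [h2]
    calc |(f x - f Sstar - (x - Sstar) * L) + (x - Sstar) * L|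
        ≤ |f x - f Sstar - (x - Sstar) * L| + |(x - Sstar) * L| := abs_add_le _ _
      _ ≤ (1 - |L|) / 2 * |x - Sstar| + |L| * |x - Sstar| := by
          rw [abs_mul, mul_comm |x - Sstar| |L|]
          exact add_le_add h1 le_rfl
      _ = k * |x - Sstar| := by rw [hkdef]; ring
  have hGASK : ∀ x ∈ Set.Icc b0 C, Tendsto (fun t => f^[t] x) atTop (𝓝 Sstar) :=
    fun x hx => hscalarGAS x (lt_of_lt_of_le hb0pos hx.1)
  have hyK : ∀ t, S (t+1) ∈ Set.Icc b0 C := by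
    intro t
    constructor
    · have h1 : b0 ≤ B (N t) := hminB' (N t) ⟨(hNpos t).le, hNC t⟩
      have h2 : 0 ≤ σS * γR * R t :=
        mul_nonneg (mul_nonneg hσS0.le hγR0.le) (hpos t).2.2.2
      have h3 : 0 ≤ σS * (1 - Φ (I t / N t)) * S t :=
        mul_nonneg (mul_nonneg hσS0.le
          (by linarith only [(hΦmap _ (hINmem t)).2])) (hpos t).1.le
      rw [hdynS t]
      linarith only [h1, h2, h3]
    · exact le_trans (hSleN (t+1)) (hNC (t+1))
  have hNSdiff : Tendsto (fun t => N t - S t) atTop (𝓝 0) := by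
    have h1 := (hEtend.add hItend).add hRtend
    simp only [add_zero] at h1
    exact h1.congr (fun t => by rw [hNdef t]; ring)
  have hBdiff : Tendsto (fun t => B (N t) - B (S t)) atTop (𝓝 0) := by
    rw [Metric.tendsto_atTop]
    intro ε hε
    have huc := isCompact_Icc.uniformContinuousOn_of_continuous
      (hBC1.continuousOn.mono (fun x (hx : x ∈ Set.Icc (0:ℝ) C) => hx.1))
    rw [Metric.uniformContinuousOn_iff] at huc
    obtain ⟨dc, hdc, hduv⟩ := huc ε hε
    obtain ⟨T, hT⟩ := Metric.tendsto_atTop.1 hNSdiff dc hdc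
    refine ⟨T, fun t ht => ?_⟩
    have h1 := hT t ht
    rw [Real.dist_eq, sub_zero] at h1
    have h2 := hduv (N t) ⟨(hNpos t).le, hNC t⟩ (S t)
      ⟨(hpos t).1.le, le_trans (hSleN t) (hNC t)⟩ (by rw [Real.dist_eq]; exact h1)
    rw [Real.dist_eq] at h2
    rw [Real.dist_eq, sub_zero]
    exact h2
  have hΦterm : Tendsto (fun t => σS * (Φ (I t / N t) * S t)) atTop (𝓝 0) := by
    apply squeeze_zero
      (fun t => mul_nonneg hσS0.le (mul_nonneg (hΦmap _ (hINmem t)).1 (hpos t).1.le))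
      (g := fun t => σS * (d0 * I t))
    · intro t
      exact mul_le_mul_of_nonneg_left (hΦSle t) hσS0.le
    · have h1 : Tendsto (fun t => d0 * I t) atTop (𝓝 (d0 * 0)) := hItend.const_mul d0
      have h2 : Tendsto (fun t => σS * (d0 * I t)) atTop (𝓝 (σS * (d0 * 0))) :=
        h1.const_mul σS
      simpa using h2
  have hRterm : Tendsto (fun t => σS * γR * R t) atTop (𝓝 0) := by
    simpa using hRtend.const_mul (σS * γR)
  have hepsS : Tendsto (fun t => S (t+1) - f (S t)) atTop (𝓝 0) := by
    have h1 := (hBdiff.add hRterm).sub hΦterm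
    simp only [add_zero, sub_zero] at h1
    apply h1.congr
    intro t
    rw [hdynS t]
    simp only [hfdef]
    ring
  have hyε : Tendsto (fun t => S (t+1+1) - f (S (t+1))) atTop (𝓝 0) :=
    hepsS.comp (tendsto_add_atTop_nat 1)
  have hStend' : Tendsto (fun t => S (t+1)) atTop (𝓝 Sstar) :=
    seirs_perturbed_tendsto f b0 C hb0pos hfc hmaps0 hmapsK Sstar δ k hδpos hk0 hk1 hδ
      hGASK (fun t => S (t+1)) hyK hyε
  have hStend : Tendsto S atTop (𝓝 Sstar) := (tendsto_add_atTop_iff_nat 1).1 hStend'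
  exact ⟨hStend, hEtend, hItend, hRtend⟩
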